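/- Let G be a graph and Q a maximal clique of G, with P the set of simplicial vertices of G contained in Q and |P| ≥ 2. Then any two vertices of P are true twins, and consequently |Q| is a Laplacian eigenvalue of G with multiplicity at least |P| - 1. -/

import Mathlib

open SimpleGraph Matrix

/-- `Q` is a maximal clique of `G`. -/
def IsMaxClique {V : Type*} (G : SimpleGraph V) (Q : Set V) : Prop :=
  G.IsClique Q ∧ ∀ Q', G.IsClique Q' → Q ⊆ Q' → Q = Q'

/-- `v` is a simplicial vertex of `G`. -/
def IsSimplicial {V : Type*} (G : SimpleGraph V) (v : V) : Prop :=
  G.IsClique (G.neighborSet v)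

/-- `Q` is a boundary clique of `G`. -/
def IsBoundaryClique {V : Type*} (G : SimpleGraph V) (Q : Set V) : Prop :=
  IsMaxClique G Q ∧ ∃ Q', IsMaxClique G Q' ∧ Q' ≠ Q ∧
    Q ∩ Q' = {v ∈ Q | ¬ IsSimplicial G v}
/-- The multiplicity of `μ` as a Laplacian eigenvalue of `G`. -/
noncomputable def lapMult {V : Type*} [Fintype V] [DecidableEq V] (G : SimpleGraph V)
    [DecidableRel G.Adj] (μ : ℝ) : ℕ :=
  Module.finrank ℝ (Module.End.eigenspace (Matrix.toLin' (G.lapMatrix ℝ)) μ)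
/-- If `Q` is a maximal clique of `G` and `P` its set of simplicial vertices with
`|P| ≥ 2`, then any two vertices of `P` are true twins, and `|Q|` is a Laplacian
eigenvalue of `G` with multiplicity at least `|P| - 1`. -/
theorem stmt_17 {V : Type*} [Fintype V] [DecidableEq V] (G : SimpleGraph V)
    [DecidableRel G.Adj] (Q P : Set V) (hQ : IsMaxClique G Q)
    (hP : P = {v ∈ Q | IsSimplicial G v}) (h2 : 2 ≤ P.ncard) :
    (∀ x ∈ P, ∀ y ∈ P, insert x (G.neighborSet x) = insert y (G.neighborSet y)) ∧
      P.ncard - 1 ≤ lapMult G (Q.ncard : ℝ) := by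
  classical
  -- Closed neighborhood of each simplicial vertex of `Q` equals `Q`.
  have hclosed : ∀ v ∈ P, insert v (G.neighborSet v) = Q := by
    intro v hv
    rw [hP] at hv
    obtain ⟨hvQ, hs⟩ := hv
    have hcl : G.IsClique (insert v (G.neighborSet v)) :=
      hs.insert (fun b hb _ => hb)
    have hsub : Q ⊆ insert v (G.neighborSet v) := by
      intro q hq
      rcases eq_or_ne q v with rfl | hne
      · exact Set.mem_insert _ _
      · exact Set.mem_insert_of_mem _ (hQ.1 hvQ hq (Ne.symm hne))
    exact (hQ.2 _ hcl hsub).symm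
  refine ⟨fun x hx y hy => by rw [hclosed x hx, hclosed y hy], ?_⟩
  -- Neighborhoods
  have hPQ : P ⊆ Q := by rw [hP]; exact fun v hv => hv.1
  have hN : ∀ v ∈ P, G.neighborSet v = Q \ {v} := by
    intro v hv
    ext u
    simp only [Set.mem_diff, Set.mem_singleton_iff, ← hclosed v hv, Set.mem_insert_iff]
    constructor
    · intro h
      exact ⟨Or.inr h, fun he => G.notMem_neighborSet_self (he ▸ h)⟩
    · rintro ⟨h1 | h1, h2⟩
      · exact absurd h1 h2
      · exact h1
  have hdeg : ∀ v ∈ P, (G.degree v : ℝ) + 1 = (Q.ncard : ℝ) := by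
    intro v hv
    have : (G.neighborSet v).ncard + 1 = Q.ncard := by
      rw [hN v hv]
      exact Set.ncard_diff_singleton_add_one (hPQ hv) (Set.toFinite _)
    rw [← this]
    push_cast
    congr 2
    rw [← G.card_neighborSet_eq_degree, Set.ncard_eq_toFinset_card']
    simp [SimpleGraph.neighborFinset]
  have hadj : ∀ v ∈ P, ∀ u, G.Adj v u ↔ u ∈ Q ∧ u ≠ v := by
    intro v hv u
    constructor
    · intro h
      have : u ∈ Q \ {v} := by rw [← hN v hv]; exact h
      exact ⟨this.1, this.2⟩
    · intro ⟨h1, h2⟩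
      have : u ∈ Q \ {v} := ⟨h1, h2⟩
      rw [← hN v hv] at this; exact this
  -- pick a base point
  obtain ⟨p0, hp0⟩ : P.Nonempty := by
    rw [← Set.ncard_pos]; omega
  -- eigenvectors
  set f : V → (V → ℝ) := fun p => Pi.single p (1 : ℝ) - Pi.single p0 (1 : ℝ) with hf
  have hadjpp : ∀ p ∈ P, ∀ q ∈ P, p ≠ q → G.Adj p q := by
    intro p hp q hq hpq
    exact (hadj p hp q).2 ⟨hPQ hq, Ne.symm hpq⟩
  have hmem : ∀ p ∈ P, f p ∈ Module.End.eigenspace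
      (Matrix.toLin' (G.lapMatrix ℝ)) (Q.ncard : ℝ) := by
    intro p hp
    rw [Module.End.mem_eigenspace_iff, Matrix.toLin'_apply]
    simp only [hf, Matrix.mulVec_sub, Matrix.mulVec_single]
    funext u
    have hL : ∀ a b : V, G.lapMatrix ℝ a b =
        (if a = b then (G.degree a : ℝ) else 0) - (if G.Adj a b then 1 else 0) := by
      intro a b
      simp [SimpleGraph.lapMatrix, SimpleGraph.degMatrix, Matrix.diagonal,
        SimpleGraph.adjMatrix, Matrix.sub_apply, Matrix.of_apply]
    have hirr : ∀ a : V, ¬ G.Adj a a := fun a => G.irrefl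
    rcases eq_or_ne u p with rfl | hup
    · rcases eq_or_ne u p0 with rfl | h00
      · simp [Pi.sub_apply]
      · have hA : G.Adj u p0 := hadjpp u hp p0 hp0 h00
        simp [hL, Pi.single_apply, h00, hA, hirr u]
        linarith [hdeg u hp]
    · rcases eq_or_ne u p0 with rfl | hup0
      · have hA : G.Adj u p := hadjpp u hp0 p hp hup
        simp [hL, Pi.single_apply, hup, hA, hirr u]
        linarith [hdeg u hp0]
      · have htw : G.Adj u p ↔ G.Adj u p0 := by
          rw [G.adj_comm u p, G.adj_comm u p0, hadj p hp u, hadj p0 hp0 u]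
          exact and_congr_right (fun _ => ⟨fun _ => hup0, fun _ => hup⟩)
        simp only [hL, Pi.single_apply, Pi.sub_apply, Pi.smul_apply, smul_eq_mul,
          Matrix.col_apply, op_smul_eq_mul, mul_one]
        simp only [if_neg hup, if_neg hup0]
        by_cases hA : G.Adj u p
        · simp [hA, htw.mp hA]
        · have hA0 : ¬ G.Adj u p0 := fun h => hA (htw.mpr h)
          simp [hA, hA0]
  -- linear independence
  haveI : Fintype ↥(P \ {p0}) := Fintype.ofFinite _
  set E := Module.End.eigenspace (Matrix.toLin' (G.lapMatrix ℝ)) (Q.ncard : ℝ) with hE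
  set g : ↥(P \ {p0}) → E := fun p => ⟨f p.1, hmem p.1 p.2.1⟩ with hg
  have hli : LinearIndependent ℝ g := by
    have hli' : LinearIndependent ℝ (fun p : ↥(P \ {p0}) => f p.1) := by
      rw [Fintype.linearIndependent_iff]
      intro c hc i
      have := congrFun hc i.1
      simp only [Finset.sum_apply, Pi.smul_apply, Pi.zero_apply, hf, Pi.sub_apply,
        Pi.single_apply, smul_eq_mul] at this
      have hi0 : (i.1 : V) ≠ p0 := i.2.2
      rw [Finset.sum_eq_single i] at this
      · simpa [hi0] using this
      · intro j _ hji
        have : (i.1 : V) ≠ j.1 := fun h => hji (Subtype.ext h.symm)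
        simp [this, hi0]
      · intro h; exact absurd (Finset.mem_univ i) h
    exact hli'.of_comp E.subtype
  have hcard : Fintype.card ↥(P \ {p0}) = P.ncard - 1 := by
    have h1 : Fintype.card ↥(P \ {p0}) = (P \ {p0}).ncard := by
      rw [← Nat.card_coe_set_eq, Nat.card_eq_fintype_card]
    rw [h1, Set.ncard_diff_singleton_of_mem hp0]
  calc P.ncard - 1 = Fintype.card ↥(P \ {p0}) := hcard.symm
    _ ≤ Module.finrank ℝ E := hli.fintype_card_le_finrank
    _ = lapMult G (Q.ncard : ℝ) := rfl
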